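/- Monotone improvement of alternating policy/opponent-model updates: starting from any conditional policy π₀ and opponent model ρ₀, define recursively π_{k+1}(s,b,a) = exp(Q_{π_k,ρ_k}(s,a,b)/α)/∑_{a'} exp(Q_{π_k,ρ_k}(s,a',b)/α) and ρ_{k+1}(s,b) ∝ P(s,b)·exp( ∑_a π_{k+1}(s,b,a)·(Q_{π_{k+1},ρ_k}(s,a,b) − α·log π_{k+1}(s,b,a)) ) (normalized over b). Then the sequence of evaluation values is pointwise nondecreasing: Q_{π_k,ρ_k}(s,a,b) ≤ Q_{π_{k+1},ρ_{k+1}}(s,a,b) for all k and all (s,a,b). -/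

import Mathlib

/-- The policy-evaluation operator
(𝒯_{π,ρ}Q)(s,a,b) = R(s,a,b) + γ·∑_{s'} p(s,a,b,s')·( ∑_{b'} ρ(s',b')·( ∑_{a'}
π(s',b',a')·(Q(s',a',b') − α·log π(s',b',a')) ) − ∑_{b'} ρ(s',b')·log(ρ(s',b')/P(s',b')) ). -/
noncomputable def evalOp {S A B : Type*} [Fintype S] [Fintype A] [Fintype B]
    (α γ : ℝ) (R : S × A × B → ℝ) (p : S → A → B → S → ℝ) (P : S → B → ℝ)
    (π : S → B → A → ℝ) (ρ : S → B → ℝ)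
    (Q : S × A × B → ℝ) : S × A × B → ℝ :=
  fun x => R x + γ * ∑ s', p x.1 x.2.1 x.2.2 s' *
    ((∑ b', ρ s' b' *
        (∑ a', π s' b' a' * (Q (s', a', b') - α * Real.log (π s' b' a'))))
      - ∑ b', ρ s' b' * Real.log (ρ s' b' / P s' b'))

/-- The greedy conditional policy π̃(s,b,a) = exp(Q(s,a,b)/α)/∑_{a'} exp(Q(s,a',b)/α). -/
noncomputable def greedyPolicy {S A B : Type*} [Fintype A]
    (α : ℝ) (Q : S × A × B → ℝ) : S → B → A → ℝ :=
  fun s b a => Real.exp (Q (s, a, b) / α) / ∑ a', Real.exp (Q (s, a', b) / α)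

/-- The improved opponent model
ρ̃(s,b) ∝ P(s,b)·exp( ∑_a π(s,b,a)·(Q(s,a,b) − α·log π(s,b,a)) ), normalized over b. -/
noncomputable def improvedOpponent {S A B : Type*} [Fintype A] [Fintype B]
    (α : ℝ) (P : S → B → ℝ) (π : S → B → A → ℝ)
    (Q : S × A × B → ℝ) : S → B → ℝ :=
  fun s b =>
    P s b * Real.exp (∑ a, π s b a * (Q (s, a, b) - α * Real.log (π s b a)))
      / ∑ b', P s b' *
          Real.exp (∑ a, π s b' a * (Q (s, a, b') - α * Real.log (π s b' a)))

/-- Gibbs' variational inequality: for any distribution q and positive weights c,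
∑ q (x - log(q/c)) ≤ log ∑ c e^x. -/
lemma gibbs_ineq {I : Type*} [Fintype I] [Nonempty I] (q c x : I → ℝ)
    (hq : ∀ i, 0 ≤ q i) (hqs : ∑ i, q i = 1) (hc : ∀ i, 0 < c i) :
    ∑ i, q i * (x i - Real.log (q i / c i)) ≤ Real.log (∑ i, c i * Real.exp (x i)) := by
  set Z := ∑ i, c i * Real.exp (x i) with hZdef
  have hZpos : 0 < Z :=
    Finset.sum_pos (fun i _ => mul_pos (hc i) (Real.exp_pos _)) Finset.univ_nonempty
  have key : ∀ i, q i * (x i - Real.log (q i / c i)) ≤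
      q i * Real.log Z + (c i * Real.exp (x i) / Z - q i) := by
    intro i
    rcases eq_or_lt_of_le (hq i) with h0 | hpos
    · rw [← h0]
      have : 0 ≤ c i * Real.exp (x i) / Z :=
        div_nonneg (mul_pos (hc i) (Real.exp_pos _)).le hZpos.le
      simp; linarith
    · have ht : 0 < c i * Real.exp (x i) / (q i * Z) :=
        div_pos (mul_pos (hc i) (Real.exp_pos _)) (mul_pos hpos hZpos)
      have hlog := Real.log_le_sub_one_of_pos ht
      have hrw : Real.log (c i * Real.exp (x i) / (q i * Z)) =
          x i - Real.log (q i / c i) - Real.log Z := by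
        rw [Real.log_div (mul_pos (hc i) (Real.exp_pos _)).ne' (mul_pos hpos hZpos).ne',
          Real.log_mul (hc i).ne' (Real.exp_pos _).ne',
          Real.log_mul hpos.ne' hZpos.ne', Real.log_exp,
          Real.log_div hpos.ne' (hc i).ne']
        ring
      rw [hrw] at hlog
      have h2 : q i * (x i - Real.log (q i / c i) - Real.log Z)
          ≤ q i * (c i * Real.exp (x i) / (q i * Z) - 1) :=
        mul_le_mul_of_nonneg_left hlog hpos.le
      have h3 : q i * (c i * Real.exp (x i) / (q i * Z) - 1)
          = c i * Real.exp (x i) / Z - q i := by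
        field_simp
      nlinarith [h2, h3]
  calc ∑ i, q i * (x i - Real.log (q i / c i))
      ≤ ∑ i, (q i * Real.log Z + (c i * Real.exp (x i) / Z - q i)) :=
        Finset.sum_le_sum (fun i _ => key i)
    _ = Real.log Z := by
        rw [Finset.sum_add_distrib, Finset.sum_sub_distrib, ← Finset.sum_mul, hqs,
          ← Finset.sum_div, ← hZdef]
        field_simp
        ring

/-- Soft policy improvement: any policy's entropy-regularized value is at most
the softmax value α log ∑ exp(Q/α). -/
lemma soft_le {I : Type*} [Fintype I] [Nonempty I] (α : ℝ) (hα : 0 < α) (q Qv : I → ℝ)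
    (hq : ∀ i, 0 ≤ q i) (hqs : ∑ i, q i = 1) :
    ∑ i, q i * (Qv i - α * Real.log (q i)) ≤ α * Real.log (∑ i, Real.exp (Qv i / α)) := by
  have h := gibbs_ineq q (fun _ => 1) (fun i => Qv i / α) hq hqs (fun _ => one_pos)
  simp only [div_one, one_mul] at h
  have h2 : ∑ i, q i * (Qv i - α * Real.log (q i))
      = α * ∑ i, q i * (Qv i / α - Real.log (q i)) := by
    rw [Finset.mul_sum]
    refine Finset.sum_congr rfl fun i _ => ?_
    field_simp
  rw [h2]
  exact mul_le_mul_of_nonneg_left h hα.le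

section facts
variable {S A B : Type*} [Fintype A] [Fintype B] [Nonempty A] [Nonempty B]

lemma greedy_nonneg (α : ℝ) (Q : S × A × B → ℝ) (s : S) (b : B) (a : A) :
    0 ≤ greedyPolicy α Q s b a := by
  unfold greedyPolicy
  have : (0:ℝ) < ∑ a', Real.exp (Q (s, a', b) / α) :=
    Finset.sum_pos (fun i _ => Real.exp_pos _) Finset.univ_nonempty
  positivity

lemma greedy_sum (α : ℝ) (Q : S × A × B → ℝ) (s : S) (b : B) :
    ∑ a, greedyPolicy α Q s b a = 1 := by
  unfold greedyPolicy
  have h : (0:ℝ) < ∑ a', Real.exp (Q (s, a', b) / α) :=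
    Finset.sum_pos (fun i _ => Real.exp_pos _) Finset.univ_nonempty
  rw [← Finset.sum_div]
  exact div_self h.ne'

lemma greedy_value (α : ℝ) (hα : 0 < α) (Q : S × A × B → ℝ) (s : S) (b : B) :
    ∑ a, greedyPolicy α Q s b a * (Q (s, a, b) - α * Real.log (greedyPolicy α Q s b a))
      = α * Real.log (∑ a', Real.exp (Q (s, a', b) / α)) := by
  have h : (0:ℝ) < ∑ a', Real.exp (Q (s, a', b) / α) :=
    Finset.sum_pos (fun i _ => Real.exp_pos _) Finset.univ_nonempty
  have hlog : ∀ a, Real.log (greedyPolicy α Q s b a)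
      = Q (s, a, b) / α - Real.log (∑ a', Real.exp (Q (s, a', b) / α)) := by
    intro a
    unfold greedyPolicy
    rw [Real.log_div (Real.exp_pos _).ne' h.ne', Real.log_exp]
  have key : ∀ a, greedyPolicy α Q s b a * (Q (s, a, b) - α * Real.log (greedyPolicy α Q s b a))
      = greedyPolicy α Q s b a * (α * Real.log (∑ a', Real.exp (Q (s, a', b) / α))) := by
    intro a
    rw [hlog a]
    congr 1
    field_simp
    ring
  rw [Finset.sum_congr rfl (fun a _ => key a), ← Finset.sum_mul, greedy_sum, one_mul]

lemma improved_nonneg (α : ℝ) (P : S → B → ℝ) (hP : ∀ s b, 0 < P s b)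
    (π : S → B → A → ℝ) (Q : S × A × B → ℝ) (s : S) (b : B) :
    0 ≤ improvedOpponent α P π Q s b := by
  unfold improvedOpponent
  have hZ : (0:ℝ) < ∑ b', P s b' *
      Real.exp (∑ a, π s b' a * (Q (s, a, b') - α * Real.log (π s b' a))) :=
    Finset.sum_pos (fun i _ => mul_pos (hP s i) (Real.exp_pos _)) Finset.univ_nonempty
  exact div_nonneg (mul_pos (hP s b) (Real.exp_pos _)).le hZ.le

lemma improved_sum (α : ℝ) (P : S → B → ℝ) (hP : ∀ s b, 0 < P s b)
    (π : S → B → A → ℝ) (Q : S × A × B → ℝ) (s : S) :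
    ∑ b, improvedOpponent α P π Q s b = 1 := by
  unfold improvedOpponent
  have hZ : (0:ℝ) < ∑ b', P s b' *
      Real.exp (∑ a, π s b' a * (Q (s, a, b') - α * Real.log (π s b' a))) :=
    Finset.sum_pos (fun i _ => mul_pos (hP s i) (Real.exp_pos _)) Finset.univ_nonempty
  rw [← Finset.sum_div]
  exact div_self hZ.ne'

lemma improved_value (α : ℝ) (P : S → B → ℝ) (hP : ∀ s b, 0 < P s b)
    (π : S → B → A → ℝ) (Q : S × A × B → ℝ) (s : S) :
    (∑ b, improvedOpponent α P π Q s b *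
        (∑ a, π s b a * (Q (s, a, b) - α * Real.log (π s b a))))
      - ∑ b, improvedOpponent α P π Q s b *
          Real.log (improvedOpponent α P π Q s b / P s b)
    = Real.log (∑ b, P s b *
        Real.exp (∑ a, π s b a * (Q (s, a, b) - α * Real.log (π s b a)))) := by
  set V : B → ℝ := fun b => ∑ a, π s b a * (Q (s, a, b) - α * Real.log (π s b a)) with hV
  set Z := ∑ b, P s b * Real.exp (V b) with hZdef
  have hZ : (0:ℝ) < Z :=
    Finset.sum_pos (fun i _ => mul_pos (hP s i) (Real.exp_pos _)) Finset.univ_nonempty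
  have hρ : ∀ b, improvedOpponent α P π Q s b = P s b * Real.exp (V b) / Z := by
    intro b; rfl
  have hlog : ∀ b, Real.log (improvedOpponent α P π Q s b / P s b) = V b - Real.log Z := by
    intro b
    rw [hρ b]
    have : P s b * Real.exp (V b) / Z / P s b = Real.exp (V b) / Z := by
      field_simp [(hP s b).ne', hZ.ne']
    rw [this, Real.log_div (Real.exp_pos _).ne' hZ.ne', Real.log_exp]
  have hsum : ∑ b, improvedOpponent α P π Q s b = 1 := improved_sum α P hP π Q s
  calc (∑ b, improvedOpponent α P π Q s b * V b)
        - ∑ b, improvedOpponent α P π Q s b *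
            Real.log (improvedOpponent α P π Q s b / P s b)
      = ∑ b, improvedOpponent α P π Q s b * Real.log Z := by
        rw [← Finset.sum_sub_distrib]
        refine Finset.sum_congr rfl fun b _ => ?_
        rw [hlog b]; ring
    _ = Real.log Z := by rw [← Finset.sum_mul, hsum, one_mul]
end facts

section op
variable {S A B : Type*} [Fintype S] [Fintype A] [Fintype B]
    [Nonempty S] [Nonempty A] [Nonempty B]
    (α γ : ℝ) (R : S × A × B → ℝ) (p : S → A → B → S → ℝ) (P : S → B → ℝ)
    (π : S → B → A → ℝ) (ρ : S → B → ℝ)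

lemma evalOp_shift_le (hγ₀ : 0 ≤ γ)
    (hp_nonneg : ∀ s a b s', 0 ≤ p s a b s') (hp_sum : ∀ s a b, ∑ s', p s a b s' = 1)
    (hπn : ∀ s b a, 0 ≤ π s b a) (hπs : ∀ s b, ∑ a, π s b a = 1)
    (hρn : ∀ s b, 0 ≤ ρ s b) (hρs : ∀ s, ∑ b, ρ s b = 1)
    (Q1 Q2 : S × A × B → ℝ) (M : ℝ) (h : ∀ x, Q1 x ≤ Q2 x + M) :
    ∀ x, evalOp α γ R p P π ρ Q1 x ≤ evalOp α γ R p P π ρ Q2 x + γ * M := by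
  intro x
  have hinner : ∀ s' b',
      ∑ a', π s' b' a' * (Q1 (s', a', b') - α * Real.log (π s' b' a'))
      ≤ (∑ a', π s' b' a' * (Q2 (s', a', b') - α * Real.log (π s' b' a'))) + M := by
    intro s' b'
    have : ∑ a', π s' b' a' * (Q1 (s', a', b') - α * Real.log (π s' b' a'))
        ≤ ∑ a', (π s' b' a' * (Q2 (s', a', b') - α * Real.log (π s' b' a'))
            + π s' b' a' * M) := by
      refine Finset.sum_le_sum fun a' _ => ?_
      nlinarith [hπn s' b' a', mul_le_mul_of_nonneg_left (h (s', a', b')) (hπn s' b' a')]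
    rw [Finset.sum_add_distrib, ← Finset.sum_mul, hπs] at this
    linarith
  have hmid : ∀ s',
      (∑ b', ρ s' b' * (∑ a', π s' b' a' * (Q1 (s', a', b') - α * Real.log (π s' b' a'))))
        - ∑ b', ρ s' b' * Real.log (ρ s' b' / P s' b')
      ≤ ((∑ b', ρ s' b' * (∑ a', π s' b' a' * (Q2 (s', a', b') - α * Real.log (π s' b' a'))))
        - ∑ b', ρ s' b' * Real.log (ρ s' b' / P s' b')) + M := by
    intro s'
    have : ∑ b', ρ s' b' * (∑ a', π s' b' a' * (Q1 (s', a', b') - α * Real.log (π s' b' a')))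
        ≤ ∑ b', (ρ s' b' *
            (∑ a', π s' b' a' * (Q2 (s', a', b') - α * Real.log (π s' b' a')))
            + ρ s' b' * M) := by
      refine Finset.sum_le_sum fun b' _ => ?_
      have h2 := mul_le_mul_of_nonneg_left (hinner s' b') (hρn s' b')
      rw [mul_add] at h2
      exact h2
    rw [Finset.sum_add_distrib, ← Finset.sum_mul, hρs] at this
    linarith
  unfold evalOp
  have : ∑ s', p x.1 x.2.1 x.2.2 s' *
      ((∑ b', ρ s' b' * (∑ a', π s' b' a' * (Q1 (s', a', b') - α * Real.log (π s' b' a'))))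
        - ∑ b', ρ s' b' * Real.log (ρ s' b' / P s' b'))
      ≤ ∑ s', (p x.1 x.2.1 x.2.2 s' *
      ((∑ b', ρ s' b' * (∑ a', π s' b' a' * (Q2 (s', a', b') - α * Real.log (π s' b' a'))))
        - ∑ b', ρ s' b' * Real.log (ρ s' b' / P s' b')) + p x.1 x.2.1 x.2.2 s' * M) := by
    refine Finset.sum_le_sum fun s' _ => ?_
    have h2 := mul_le_mul_of_nonneg_left (hmid s') (hp_nonneg x.1 x.2.1 x.2.2 s')
    rw [mul_add] at h2
    exact h2
  rw [Finset.sum_add_distrib, ← Finset.sum_mul, hp_sum] at this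
  nlinarith [mul_le_mul_of_nonneg_left this hγ₀]

lemma le_fixed_of_le_evalOp (hγ₀ : 0 ≤ γ) (hγ₁ : γ < 1)
    (hp_nonneg : ∀ s a b s', 0 ≤ p s a b s') (hp_sum : ∀ s a b, ∑ s', p s a b s' = 1)
    (hπn : ∀ s b a, 0 ≤ π s b a) (hπs : ∀ s b, ∑ a, π s b a = 1)
    (hρn : ∀ s b, 0 ≤ ρ s b) (hρs : ∀ s, ∑ b, ρ s b = 1)
    (Q Q' : S × A × B → ℝ)
    (hfix : evalOp α γ R p P π ρ Q' = Q')
    (hle : ∀ x, Q x ≤ evalOp α γ R p P π ρ Q x) :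
    ∀ x, Q x ≤ Q' x := by
  obtain ⟨x₀, -, hx₀⟩ := Finset.exists_max_image Finset.univ (fun x => Q x - Q' x)
    Finset.univ_nonempty
  set M := Q x₀ - Q' x₀ with hM
  have hMb : ∀ x, Q x ≤ Q' x + M := fun x => by
    have := hx₀ x (Finset.mem_univ x); linarith
  have h2 := evalOp_shift_le α γ R p P π ρ hγ₀ hp_nonneg hp_sum hπn hπs hρn hρs Q Q' M hMb
  have h3 : ∀ x, Q x ≤ Q' x + γ * M := by
    intro x
    have := h2 x
    rw [hfix] at this
    exact (hle x).trans this
  have hM0 : M ≤ 0 := by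
    have := h3 x₀
    nlinarith
  intro x
  have := hx₀ x (Finset.mem_univ x)
  linarith
end op


/-- Monotone improvement of alternating policy/opponent-model updates:
starting from any conditional policy π₀ and opponent model ρ₀, with
π_{k+1} the greedy policy of Q_{π_k,ρ_k} and ρ_{k+1} the improved opponent model
computed from Q_{π_{k+1},ρ_k}, the sequence of evaluation values Q_{π_k,ρ_k}
(each the unique fixed point of its policy-evaluation operator) is pointwise
nondecreasing in k. -/
theorem alternating_updates_monotone_improvement
    {S A B : Type*} [Fintype S] [Fintype A] [Fintype B]
    [Nonempty S] [Nonempty A] [Nonempty B]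
    (α γ : ℝ) (hα : 0 < α) (hγ₀ : 0 ≤ γ) (hγ₁ : γ < 1)
    (R : S × A × B → ℝ)
    (p : S → A → B → S → ℝ)
    (hp_nonneg : ∀ s a b s', 0 ≤ p s a b s') (hp_sum : ∀ s a b, ∑ s', p s a b s' = 1)
    (P : S → B → ℝ) (hP_pos : ∀ s b, 0 < P s b) (hP_sum : ∀ s, ∑ b, P s b = 1)
    (πseq : ℕ → S → B → A → ℝ) (ρseq : ℕ → S → B → ℝ)
    (hπ0_nonneg : ∀ s b a, 0 ≤ πseq 0 s b a) (hπ0_sum : ∀ s b, ∑ a, πseq 0 s b a = 1)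
    (hρ0_nonneg : ∀ s b, 0 ≤ ρseq 0 s b) (hρ0_sum : ∀ s, ∑ b, ρseq 0 s b = 1)
    (Qseq : ℕ → S × A × B → ℝ)
    (hQseq : ∀ k, evalOp α γ R p P (πseq k) (ρseq k) (Qseq k) = Qseq k)
    (Qmix : ℕ → S × A × B → ℝ)
    (hQmix : ∀ k, evalOp α γ R p P (πseq (k + 1)) (ρseq k) (Qmix k) = Qmix k)
    (hπ_rec : ∀ k, πseq (k + 1) = greedyPolicy α (Qseq k))
    (hρ_rec : ∀ k, ρseq (k + 1) = improvedOpponent α P (πseq (k + 1)) (Qmix k)) :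
    ∀ (k : ℕ) (x : S × A × B), Qseq k x ≤ Qseq (k + 1) x := by
  -- policies are distributions at every stage
  have hπ : ∀ k, (∀ s b a, 0 ≤ πseq k s b a) ∧ (∀ s b, ∑ a, πseq k s b a = 1) := by
    intro k
    cases k with
    | zero => exact ⟨hπ0_nonneg, hπ0_sum⟩
    | succ n =>
      rw [hπ_rec n]
      exact ⟨fun s b a => greedy_nonneg α (Qseq n) s b a,
        fun s b => greedy_sum α (Qseq n) s b⟩
  have hρ : ∀ k, (∀ s b, 0 ≤ ρseq k s b) ∧ (∀ s, ∑ b, ρseq k s b = 1) := by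
    intro k
    cases k with
    | zero => exact ⟨hρ0_nonneg, hρ0_sum⟩
    | succ n =>
      rw [hρ_rec n]
      exact ⟨fun s b => improved_nonneg α P hP_pos (πseq (n+1)) (Qmix n) s b,
        fun s => improved_sum α P hP_pos (πseq (n+1)) (Qmix n) s⟩
  intro k x
  -- Step A: Qseq k ≤ evalOp with improved policy
  have hA : ∀ y, Qseq k y ≤ evalOp α γ R p P (πseq (k+1)) (ρseq k) (Qseq k) y := by
    intro y
    conv_lhs => rw [← hQseq k]
    unfold evalOp
    have hin : ∀ s' b',
        ∑ a', πseq k s' b' a' * (Qseq k (s', a', b') - α * Real.log (πseq k s' b' a'))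
        ≤ ∑ a', πseq (k+1) s' b' a' *
            (Qseq k (s', a', b') - α * Real.log (πseq (k+1) s' b' a')) := by
      intro s' b'
      rw [hπ_rec k]
      calc ∑ a', πseq k s' b' a' * (Qseq k (s', a', b') - α * Real.log (πseq k s' b' a'))
          ≤ α * Real.log (∑ a', Real.exp (Qseq k (s', a', b') / α)) :=
            soft_le α hα (fun a => πseq k s' b' a) (fun a => Qseq k (s', a, b'))
              (fun a => (hπ k).1 s' b' a) ((hπ k).2 s' b')
        _ = ∑ a', greedyPolicy α (Qseq k) s' b' a' *
              (Qseq k (s', a', b') - α * Real.log (greedyPolicy α (Qseq k) s' b' a')) :=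
            (greedy_value α hα (Qseq k) s' b').symm
    have hbr : ∀ s',
        (∑ b', ρseq k s' b' *
            (∑ a', πseq k s' b' a' * (Qseq k (s', a', b') - α * Real.log (πseq k s' b' a'))))
          - ∑ b', ρseq k s' b' * Real.log (ρseq k s' b' / P s' b')
        ≤ (∑ b', ρseq k s' b' *
            (∑ a', πseq (k+1) s' b' a' *
              (Qseq k (s', a', b') - α * Real.log (πseq (k+1) s' b' a'))))
          - ∑ b', ρseq k s' b' * Real.log (ρseq k s' b' / P s' b') := by
      intro s'
      refine sub_le_sub_right (Finset.sum_le_sum fun b' _ => ?_) _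
      exact mul_le_mul_of_nonneg_left (hin s' b') ((hρ k).1 s' b')
    have hsum : ∑ s', p y.1 y.2.1 y.2.2 s' *
        ((∑ b', ρseq k s' b' *
            (∑ a', πseq k s' b' a' * (Qseq k (s', a', b') - α * Real.log (πseq k s' b' a'))))
          - ∑ b', ρseq k s' b' * Real.log (ρseq k s' b' / P s' b'))
        ≤ ∑ s', p y.1 y.2.1 y.2.2 s' *
        ((∑ b', ρseq k s' b' *
            (∑ a', πseq (k+1) s' b' a' *
              (Qseq k (s', a', b') - α * Real.log (πseq (k+1) s' b' a'))))
          - ∑ b', ρseq k s' b' * Real.log (ρseq k s' b' / P s' b')) :=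
      Finset.sum_le_sum fun s' _ =>
        mul_le_mul_of_nonneg_left (hbr s') (hp_nonneg y.1 y.2.1 y.2.2 s')
    nlinarith [mul_le_mul_of_nonneg_left hsum hγ₀]
  have hstepA : ∀ y, Qseq k y ≤ Qmix k y :=
    le_fixed_of_le_evalOp α γ R p P (πseq (k+1)) (ρseq k) hγ₀ hγ₁ hp_nonneg hp_sum
      (hπ (k+1)).1 (hπ (k+1)).2 (hρ k).1 (hρ k).2 (Qseq k) (Qmix k) (hQmix k) hA
  -- Step B: Qmix k ≤ evalOp with improved opponent model
  have hB : ∀ y, Qmix k y ≤ evalOp α γ R p P (πseq (k+1)) (ρseq (k+1)) (Qmix k) y := by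
    intro y
    conv_lhs => rw [← hQmix k]
    unfold evalOp
    have hbr : ∀ s',
        (∑ b', ρseq k s' b' *
            (∑ a', πseq (k+1) s' b' a' *
              (Qmix k (s', a', b') - α * Real.log (πseq (k+1) s' b' a'))))
          - ∑ b', ρseq k s' b' * Real.log (ρseq k s' b' / P s' b')
        ≤ (∑ b', ρseq (k+1) s' b' *
            (∑ a', πseq (k+1) s' b' a' *
              (Qmix k (s', a', b') - α * Real.log (πseq (k+1) s' b' a'))))
          - ∑ b', ρseq (k+1) s' b' * Real.log (ρseq (k+1) s' b' / P s' b') := by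
      intro s'
      have hgib := gibbs_ineq (fun b => ρseq k s' b) (fun b => P s' b)
        (fun b => ∑ a', πseq (k+1) s' b a' *
          (Qmix k (s', a', b) - α * Real.log (πseq (k+1) s' b a')))
        (fun b => (hρ k).1 s' b) ((hρ k).2 s') (fun b => hP_pos s' b)
      have hlhs : (∑ b', ρseq k s' b' *
            (∑ a', πseq (k+1) s' b' a' *
              (Qmix k (s', a', b') - α * Real.log (πseq (k+1) s' b' a'))))
          - ∑ b', ρseq k s' b' * Real.log (ρseq k s' b' / P s' b')
          = ∑ b', ρseq k s' b' *
            ((∑ a', πseq (k+1) s' b' a' *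
              (Qmix k (s', a', b') - α * Real.log (πseq (k+1) s' b' a')))
             - Real.log (ρseq k s' b' / P s' b')) := by
        rw [← Finset.sum_sub_distrib]
        exact Finset.sum_congr rfl fun b' _ => (mul_sub _ _ _).symm
      have hrhs := improved_value α P hP_pos (πseq (k+1)) (Qmix k) s'
      rw [hlhs]
      rw [hρ_rec k]
      rw [hrhs]
      exact hgib
    have hsum : ∑ s', p y.1 y.2.1 y.2.2 s' *
        ((∑ b', ρseq k s' b' *
            (∑ a', πseq (k+1) s' b' a' *
              (Qmix k (s', a', b') - α * Real.log (πseq (k+1) s' b' a'))))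
          - ∑ b', ρseq k s' b' * Real.log (ρseq k s' b' / P s' b'))
        ≤ ∑ s', p y.1 y.2.1 y.2.2 s' *
        ((∑ b', ρseq (k+1) s' b' *
            (∑ a', πseq (k+1) s' b' a' *
              (Qmix k (s', a', b') - α * Real.log (πseq (k+1) s' b' a'))))
          - ∑ b', ρseq (k+1) s' b' * Real.log (ρseq (k+1) s' b' / P s' b')) :=
      Finset.sum_le_sum fun s' _ =>
        mul_le_mul_of_nonneg_left (hbr s') (hp_nonneg y.1 y.2.1 y.2.2 s')
    nlinarith [mul_le_mul_of_nonneg_left hsum hγ₀]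
  have hstepB : ∀ y, Qmix k y ≤ Qseq (k+1) y :=
    le_fixed_of_le_evalOp α γ R p P (πseq (k+1)) (ρseq (k+1)) hγ₀ hγ₁ hp_nonneg hp_sum
      (hπ (k+1)).1 (hπ (k+1)).2 (hρ (k+1)).1 (hρ (k+1)).2 (Qmix k) (Qseq (k+1))
      (hQseq (k+1)) hB
  exact (hstepA x).trans (hstepB x)
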